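/- arXiv:1305.0799 — 4 statements merged into one kernel-verified Lean document; each statement's English description precedes it below -/
import Mathlib

section
/- If L is a positive linear functional on R^{ℓ×ℓ}⟨x,x*⟩ and polynomials p_1,...,p_n ∈ R^{1×ℓ}⟨x,x*⟩ satisfy that Σ_i p_i* p_i lies in R^{ℓ×1}·I + I*·R^{1×ℓ} where I = {θ : L(θ*θ) = 0}, then each p_i ∈ I. In other words, I is a real left module. -/
open scoped BigOperators

namespace NSS

/-- Words in the `2g` free letters `x_1,…,x_g,x_1^*,…,x_g^*`
(a letter is a pair of an index and a `Bool`: `false` = unstarred, `true` = starred). -/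
abbrev Word (g : ℕ) := FreeMonoid (Fin g × Bool)

/-- The free `*`-algebra `ℝ⟨x,x*⟩`. -/
abbrev NC (g : ℕ) := MonoidAlgebra ℝ (Word g)

/-- `ν × ℓ` matrices of noncommutative polynomials. -/
abbrev NCMat (g ν ℓ : ℕ) := Matrix (Fin ν) (Fin ℓ) (NC g)

/-- The involution on words: reverse the word and swap starred/unstarred letters. -/
def wordStar {g : ℕ} (w : Word g) : Word g :=
  FreeMonoid.ofList (((FreeMonoid.toList w).map (fun p => (p.1, !p.2))).reverse)

/-- The involution on `ℝ⟨x,x*⟩`. -/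
noncomputable def ncStar {g : ℕ} (p : NC g) : NC g :=
  MonoidAlgebra.ofCoeff (Finsupp.mapDomain wordStar (p.coeff : Word g →₀ ℝ))

/-- The involution on matrix polynomials: transpose and apply `ncStar` entrywise. -/
noncomputable def matStar {g ν ℓ : ℕ} (p : NCMat g ν ℓ) : NCMat g ℓ ν :=
  Matrix.of fun i j => ncStar (p j i)

/-- The left action of a scalar polynomial on a matrix polynomial
(entrywise left multiplication, identifying `q` with `I ⊗ q`). -/
noncomputable def leftMul {g ν ℓ : ℕ} (q : NC g) (p : NCMat g ν ℓ) : NCMat g ν ℓ :=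
  Matrix.of fun i j => q * p i j

/-- A constant real matrix, viewed as a matrix of noncommutative polynomials. -/
noncomputable def constMat {g m n : ℕ} (A : Matrix (Fin m) (Fin n) ℝ) : NCMat g m n :=
  A.map (algebraMap ℝ (NC g))

/-- The space `ℝ^{ℓ×1}·I + I^*·ℝ^{1×ℓ}`. -/
noncomputable def realPart {g ℓ : ℕ} (I : Set (NCMat g 1 ℓ)) : Submodule ℝ (NCMat g ℓ ℓ) :=
  Submodule.span ℝ
    ({m | ∃ B : Matrix (Fin ℓ) (Fin 1) ℝ, ∃ a ∈ I, m = constMat B * a} ∪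
     {m | ∃ B : Matrix (Fin 1) (Fin ℓ) ℝ, ∃ a ∈ I, m = matStar a * constMat B})

/-- Left `ℝ⟨x,x*⟩`-submodules of `ℝ^{1×ℓ}⟨x,x*⟩`. -/
def IsLeftSubmodule {g ℓ : ℕ} (I : Set (NCMat g 1 ℓ)) : Prop :=
  0 ∈ I ∧ (∀ a b, a ∈ I → b ∈ I → a + b ∈ I) ∧
    (∀ (r : ℝ) a, a ∈ I → r • a ∈ I) ∧ ∀ (q : NC g) a, a ∈ I → leftMul q a ∈ I

/-- A left module `I` is *real* if any finite sum of hermitian squares lying in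
`ℝ^{ℓ×1}·I + I^*·ℝ^{1×ℓ}` has all its terms in `I`. -/
def IsReal {g ℓ : ℕ} (I : Set (NCMat g 1 ℓ)) : Prop :=
  ∀ (n : ℕ) (p : Fin n → NCMat g 1 ℓ),
    (∑ i, matStar (p i) * p i) ∈ realPart I → ∀ i, p i ∈ I

/-- The monomial `e_j ⊗ w ∈ ℝ^{1×ℓ}⟨x,x*⟩`. -/
noncomputable def rowMono {g ℓ : ℕ} (j : Fin ℓ) (w : Word g) : NCMat g 1 ℓ :=
  Matrix.of fun _ j' => if j' = j then (MonoidAlgebra.single w (1:ℝ) : NC g) else 0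

/-- The left `ℝ⟨x,x*⟩`-submodule generated by a set. -/
def leftSpan {g ℓ : ℕ} (G : Set (NCMat g 1 ℓ)) : Set (NCMat g 1 ℓ) :=
  ⋂₀ {J | IsLeftSubmodule J ∧ G ⊆ J}



lemma wordStar_mul {g : ℕ} (u v : Word g) : wordStar (u * v) = wordStar v * wordStar u := by
  simp [wordStar, FreeMonoid.toList_mul]

lemma wordStar_wordStar {g : ℕ} (w : Word g) : wordStar (wordStar w) = w := by
  simp [wordStar, Function.comp_def]

lemma ncStar_single {g : ℕ} (w : Word g) (r : ℝ) :
    ncStar (MonoidAlgebra.single w r) = MonoidAlgebra.single (wordStar w) r := by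
  simp [ncStar, Finsupp.mapDomain_single, MonoidAlgebra.coeff_single, MonoidAlgebra.ofCoeff_single]

lemma ncStar_add {g : ℕ} (p q : NC g) : ncStar (p + q) = ncStar p + ncStar q := by
  unfold ncStar; rw [MonoidAlgebra.coeff_add, Finsupp.mapDomain_add, MonoidAlgebra.ofCoeff_add]

lemma ncStar_smul {g : ℕ} (t : ℝ) (p : NC g) : ncStar (t • p) = t • ncStar p := by
  unfold ncStar; rw [MonoidAlgebra.coeff_smul, Finsupp.mapDomain_smul, MonoidAlgebra.ofCoeff_smul]

lemma ncStar_sum {g : ℕ} {ι : Type*} (s : Finset ι) (f : ι → NC g) :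
    ncStar (∑ i ∈ s, f i) = ∑ i ∈ s, ncStar (f i) := by
  classical
  induction s using Finset.induction_on with
  | empty => simp [ncStar]
  | insert a s ha ih => rw [Finset.sum_insert ha, Finset.sum_insert ha, ncStar_add, ih]

lemma ncStar_mul {g : ℕ} (p q : NC g) : ncStar (p * q) = ncStar q * ncStar p := by
  induction p using MonoidAlgebra.induction_linear with
  | zero => simp [ncStar]
  | add a b ha hb => rw [add_mul, ncStar_add, ncStar_add, ha, hb, mul_add]
  | single a r =>
    induction q using MonoidAlgebra.induction_linear with
    | zero => simp [ncStar]
    | add c d hc hd => rw [mul_add, ncStar_add, ncStar_add, hc, hd, add_mul]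
    | single c s =>
      rw [MonoidAlgebra.single_mul_single, ncStar_single, ncStar_single, ncStar_single,
        MonoidAlgebra.single_mul_single, wordStar_mul, mul_comm]

lemma ncStar_ncStar {g : ℕ} (p : NC g) : ncStar (ncStar p) = p := by
  unfold ncStar
  rw [MonoidAlgebra.coeff_ofCoeff, ← Finsupp.mapDomain_comp]
  have : wordStar ∘ wordStar = (id : Word g → Word g) := funext fun w => wordStar_wordStar w
  rw [this, Finsupp.mapDomain_id, MonoidAlgebra.ofCoeff_coeff]

lemma ncStar_algebraMap {g : ℕ} (r : ℝ) :
    ncStar (algebraMap ℝ (NC g) r) = algebraMap ℝ (NC g) r := by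
  show ncStar (MonoidAlgebra.single 1 r) = _
  rw [ncStar_single]; rfl

lemma matStar_mul {g ν κ ℓ : ℕ} (A : NCMat g ν κ) (B : NCMat g κ ℓ) :
    matStar (A * B) = matStar B * matStar A := by
  ext i j
  simp only [matStar, Matrix.of_apply, Matrix.mul_apply, ncStar_sum, ncStar_mul]

lemma matStar_matStar {g ν ℓ : ℕ} (A : NCMat g ν ℓ) : matStar (matStar A) = A := by
  ext i j
  simp [matStar, ncStar_ncStar]

lemma matStar_add {g ν ℓ : ℕ} (A B : NCMat g ν ℓ) :
    matStar (A + B) = matStar A + matStar B := by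
  ext i j; simp [matStar, ncStar_add]

lemma matStar_smul {g ν ℓ : ℕ} (t : ℝ) (A : NCMat g ν ℓ) :
    matStar (t • A) = t • matStar A := by
  ext i j; simp [matStar, ncStar_smul]

lemma matStar_constMat {g m n : ℕ} (A : Matrix (Fin m) (Fin n) ℝ) :
    matStar (constMat A : NCMat g m n) = constMat A.transpose := by
  refine Matrix.ext fun i j => ?_
  show ncStar (algebraMap ℝ (NC g) (A j i)) = algebraMap ℝ (NC g) (A.transpose i j)
  rw [ncStar_algebraMap]; rfl

/-- the zero set `I = {θ : L(θ*θ) = 0}` of a positive linear functional on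
`ℝ^{ℓ×ℓ}⟨x,x*⟩` is a real left module: any finite sum `Σ pᵢ*pᵢ` lying in
`ℝ^{ℓ×1}·I + I*·ℝ^{1×ℓ}` has each `pᵢ ∈ I`. -/
theorem stmt3 {g ℓ : ℕ} (L : NCMat g ℓ ℓ →ₗ[ℝ] ℝ)
    (hsym : ∀ ω : NCMat g ℓ ℓ, L (matStar ω) = L ω)
    (hpos : ∀ w : NCMat g 1 ℓ, 0 ≤ L (matStar w * w)) :
    IsReal {θ : NCMat g 1 ℓ | L (matStar θ * θ) = 0} := by
  intro n p hsum i
  -- Cauchy–Schwarz consequence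
  have cs : ∀ q a : NCMat g 1 ℓ, L (matStar a * a) = 0 → L (matStar q * a) = 0 := by
    intro q a ha
    have hsym' : L (matStar a * q) = L (matStar q * a) := by
      have h := hsym (matStar q * a)
      rw [matStar_mul, matStar_matStar] at h
      exact h
    have key : ∀ t : ℝ, 0 ≤ L (matStar q * q) + 2 * t * L (matStar q * a) := by
      intro t
      have h := hpos (q + t • a)
      simp only [matStar_add, matStar_smul, Matrix.add_mul, Matrix.mul_add, Matrix.mul_smul, Matrix.smul_mul, smul_smul,
        map_add, map_smul, smul_eq_mul, ha, hsym', mul_zero] at h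
      linarith
    by_contra hb
    set b := L (matStar q * a) with hbdef
    set c := L (matStar q * q) with hcdef
    have h := key (-(c + 1) / (2 * b))
    have hb2 : (2 : ℝ) * b ≠ 0 := by
      intro h2; exact hb (by linarith [mul_eq_zero.mp h2])
    have : c + 2 * (-(c + 1) / (2 * b)) * b = -1 := by
      field_simp
      ring
    linarith
  -- L vanishes on the generators, hence on realPart
  have hgenB : ∀ (B : Matrix (Fin ℓ) (Fin 1) ℝ) (a : NCMat g 1 ℓ),
      L (matStar a * a) = 0 → L (constMat B * a) = 0 := by
    intro B a ha
    have hB : (constMat B : NCMat g ℓ 1) = matStar (constMat B.transpose) := by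
      rw [matStar_constMat, Matrix.transpose_transpose]
    rw [hB]
    exact cs _ a ha
  have hzero : ∀ m ∈ realPart {θ : NCMat g 1 ℓ | L (matStar θ * θ) = 0}, L m = 0 := by
    intro m hm
    induction hm using Submodule.span_induction with
    | mem x hx =>
      rcases hx with ⟨B, a, ha, rfl⟩ | ⟨B, a, ha, rfl⟩
      · exact hgenB B a ha
      · have h := (hsym (matStar a * constMat B)).symm
        erw [matStar_mul] at h
        rw [matStar_matStar, matStar_constMat] at h
        rw [h]
        exact hgenB _ a ha
    | zero => simp
    | add x y _ _ hx hy => rw [map_add, hx, hy, add_zero]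
    | smul t x _ hx => rw [map_smul, hx, smul_zero]
  have h0 : L (∑ i, matStar (p i) * p i) = 0 := hzero _ hsum
  rw [map_sum] at h0
  exact (Finset.sum_eq_zero_iff_of_nonneg (fun i _ => hpos (p i))).mp h0 i (Finset.mem_univ i)


end NSS
end

section
/- A left module I ⊆ R^{1×ℓ}⟨x,x*⟩ is real if and only if whenever Σ_i p_i*p_i ∈ R^{ℓ×1}I + I*R^{1×ℓ} for finitely many matrix polynomials p_i ∈ R^{ν_i×ℓ}⟨x,x*⟩ (of possibly varying row dimensions ν_i), each p_i lies in R^{ν_i×1}·I. -/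
open scoped BigOperators

namespace NSS

/-- The `j`-th row of a matrix polynomial, as a `1 × ℓ` matrix. -/
noncomputable def rowOf {g ν ℓ : ℕ} (p : NCMat g ν ℓ) (j : Fin ν) : NCMat g 1 ℓ :=
  Matrix.of fun _ c => p j c

lemma matStar_mul_self_eq_sum_rows {g ν ℓ : ℕ} (p : NCMat g ν ℓ) :
    matStar p * p = ∑ j, matStar (rowOf p j) * rowOf p j := by
  ext a b
  simp [Matrix.mul_apply, matStar, rowOf, Matrix.sum_apply]

lemma eq_sum_const_rows {g ν ℓ : ℕ} (p : NCMat g ν ℓ) :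
    p = ∑ j, constMat (Matrix.single j 0 (1:ℝ)) * rowOf p j := by
  refine Matrix.ext fun a b => ?_
  rw [Matrix.sum_apply, Finset.sum_eq_single a]
  · erw [Matrix.mul_apply]
    simp [constMat, rowOf, Matrix.single, ← MonoidAlgebra.one_def]
  · intro j _ hj
    erw [Matrix.mul_apply]
    simp [constMat, rowOf, Matrix.single, hj]
  · simp

lemma const_one_mul {g ℓ : ℕ} (B : Matrix (Fin 1) (Fin 1) ℝ) (a : NCMat g 1 ℓ) :
    constMat B * a = (B 0 0) • a := by
  ext r c
  erw [Matrix.mul_apply]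
  simp [constMat, Fin.sum_univ_one, Algebra.smul_def]
  have : r = 0 := Subsingleton.elim r 0
  subst this
  rfl

/-- a left module `I ⊆ ℝ^{1×ℓ}⟨x,x*⟩` is real iff whenever
`Σ pᵢ*pᵢ ∈ ℝ^{ℓ×1}I + I*ℝ^{1×ℓ}` for matrix polynomials `pᵢ ∈ ℝ^{νᵢ×ℓ}⟨x,x*⟩`,
each `pᵢ` lies in `ℝ^{νᵢ×1}·I`. -/
theorem stmt4 {g ℓ : ℕ} (I : Set (NCMat g 1 ℓ)) (hI : IsLeftSubmodule I) :
    IsReal I ↔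
      ∀ (n : ℕ) (ν : Fin n → ℕ) (p : ∀ i, NCMat g (ν i) ℓ),
        (∑ i, matStar (p i) * p i) ∈ realPart I →
          ∀ i, p i ∈ Submodule.span ℝ
            {m : NCMat g (ν i) ℓ | ∃ B : Matrix (Fin (ν i)) (Fin 1) ℝ, ∃ a ∈ I,
              m = constMat B * a} := by
  obtain ⟨h0, hadd, hsmul, hmul⟩ := hI
  constructor
  · intro hreal n ν p hp i
    -- flatten
    set σ := (Σ i : Fin n, Fin (ν i))
    let e : Fin (Fintype.card σ) ≃ σ := (Fintype.equivFin σ).symm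
    let q : Fin (Fintype.card σ) → NCMat g 1 ℓ := fun k => rowOf (p (e k).1) (e k).2
    have hsum : (∑ k, matStar (q k) * q k) = ∑ i, matStar (p i) * p i := by
      have h1 : (∑ k, matStar (q k) * q k)
          = ∑ s : σ, matStar (rowOf (p s.1) s.2) * rowOf (p s.1) s.2 :=
        Equiv.sum_comp e (fun s => matStar (rowOf (p s.1) s.2) * rowOf (p s.1) s.2)
      rw [h1, ← Finset.univ_sigma_univ, Finset.sum_sigma]
      exact Finset.sum_congr rfl fun i _ => (matStar_mul_self_eq_sum_rows (p i)).symm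
    have hrows : ∀ j, rowOf (p i) j ∈ I := by
      intro j
      have key := hreal (Fintype.card σ) q (by rw [hsum]; exact hp) (e.symm ⟨i, j⟩)
      have he : e (e.symm ⟨i, j⟩) = ⟨i, j⟩ := e.apply_symm_apply _
      simp only [q] at key
      rw [he] at key
      exact key
    rw [eq_sum_const_rows (p i)]
    refine Submodule.sum_mem _ fun j _ => Submodule.subset_span ?_
    exact ⟨Matrix.single j 0 1, rowOf (p i) j, hrows j, rfl⟩
  · intro h n p hp i
    have := h n (fun _ => 1) p hp i
    refine Submodule.span_induction ?_ h0 (fun a b _ _ ha hb => hadd a b ha hb)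
      (fun r a _ ha => hsmul r a ha) this
    rintro m ⟨B, a, haI, rfl⟩
    rw [const_one_mul]
    exact hsmul _ a haI

end NSS
end

section
/- Let 𝔠 ⊆ R^{1×ℓ}⟨x,x*⟩ be a right chip space. A monomial m ∈ M^{1×ℓ} lies in R⟨x,x*⟩𝔠 \ 𝔠 if and only if m = w·m̄ for some word w ∈ ⟨x,x*⟩ and some monomial m̄ ∈ R⟨x,x*⟩₁𝔠 \ 𝔠 (i.e., m̄ is a product of a single letter and a monomial of 𝔠, but m̄ ∉ 𝔠); moreover this representation is unique. -/
open scoped BigOperators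

namespace NSS

/-- A set of row monomials (indexed by column and word) closed under right chips. -/
def IsRightChipClosed {g ℓ : ℕ} (S : Set (Fin ℓ × Word g)) : Prop :=
  ∀ (j : Fin ℓ) (u v : Word g), (j, u * v) ∈ S → (j, v) ∈ S

/-- The right chip space spanned by a chip-closed set of monomials. -/
noncomputable def chipSpace {g ℓ : ℕ} (S : Set (Fin ℓ × Word g)) :
    Submodule ℝ (NCMat g 1 ℓ) :=
  Submodule.span ℝ {p | ∃ m ∈ S, p = rowMono m.1 m.2}

/-- The space `ℝ⟨x,x*⟩·𝔠`. -/
noncomputable def algSpanChip {g ℓ : ℕ} (S : Set (Fin ℓ × Word g)) :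
    Submodule ℝ (NCMat g 1 ℓ) :=
  Submodule.span ℝ {p | ∃ q : NC g, ∃ c ∈ chipSpace S, p = leftMul q c}

/-- `Γ(𝔠)`: the set of columns `j` with `e_j ⊗ 1 ∈ 𝔠`. -/
def Gam {g ℓ : ℕ} (S : Set (Fin ℓ × Word g)) : Set (Fin ℓ) :=
  {j | (j, (1 : Word g)) ∈ S}

/-- The direct sum `⨁_{j ∈ Γ} e_j ⊗ ℝ⟨x,x*⟩`, i.e. row polynomials supported on
columns in `Γ`. -/
noncomputable def colSupported {g ℓ : ℕ} (Γ : Set (Fin ℓ)) : Submodule ℝ (NCMat g 1 ℓ) where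
  carrier := {p | ∀ j ∉ Γ, p 0 j = 0}
  add_mem' := by
    intro a b ha hb j hj
    simp [Matrix.add_apply, ha j hj, hb j hj]
  zero_mem' := by intro j hj; simp
  smul_mem' := by
    intro c a ha j hj
    simp [Matrix.smul_apply, ha j hj]

private lemma auxList {L : Type*} (T : Set (List L))
    (hT : ∀ u v : List L, u ++ v ∈ T → v ∈ T) :
    ∀ u : List L, u ∉ T → (∃ a b, u = a ++ b ∧ b ∈ T) →
      ∃! p : List L × List L,
        u = p.1 ++ p.2 ∧ (∃ ξ b, p.2 = ξ :: b ∧ b ∈ T) ∧ p.2 ∉ T := by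
  intro u
  induction u with
  | nil =>
    rintro hu ⟨a, b, hab, hb⟩
    obtain ⟨-, rfl⟩ := List.append_eq_nil_iff.mp hab.symm
    exact absurd hb hu
  | cons ξ t ih =>
    rintro hu ⟨a, b, hab, hb⟩
    by_cases ht : t ∈ T
    · refine ⟨([], ξ :: t), ⟨rfl, ⟨ξ, t, rfl, ht⟩, hu⟩, ?_⟩
      rintro ⟨w, m⟩ ⟨heq, -, hmT⟩
      match w, heq with
      | [], heq => simp at heq; simp [heq]
      | c :: w', heq =>
        simp only [List.cons_append, List.cons.injEq] at heq
        exact absurd (hT w' m (heq.2 ▸ ht)) hmT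
    · have hb' : ∃ a' b', t = a' ++ b' ∧ b' ∈ T := by
        match a, hab with
        | [], hab => exact absurd (by simpa using hab.symm ▸ hb) hu
        | c :: a', hab =>
          simp only [List.cons_append, List.cons.injEq] at hab
          exact ⟨a', b, hab.2, hb⟩
      obtain ⟨⟨w, m⟩, ⟨heq, hex, hmT⟩, huniq⟩ := ih ht hb'
      refine ⟨(ξ :: w, m), ⟨by simp [heq], hex, hmT⟩, ?_⟩
      rintro ⟨w2, m2⟩ ⟨heq2, hex2, hm2T⟩
      match w2, heq2 with
      | [], heq2 =>
        obtain ⟨ξ2, b2, hm2, hb2⟩ := hex2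
        simp only [List.nil_append] at heq2
        rw [← heq2] at hm2
        simp only [List.cons.injEq] at hm2
        exact absurd (hm2.2 ▸ hb2) ht
      | c :: w2', heq2 =>
        simp only [List.cons_append, List.cons.injEq] at heq2
        have := huniq (w2', m2) ⟨heq2.2, hex2, hm2T⟩
        rw [Prod.mk.injEq] at this ⊢
        exact ⟨by rw [heq2.1, this.1], this.2⟩

/-- a monomial `e_j ⊗ u` lies in `ℝ⟨x,x*⟩𝔠 \ 𝔠` iff it can be written
uniquely as `u = w·m̄` where `m̄` is a single letter times a chip but is not itself a
chip (`m̄ ∈ ℝ⟨x,x*⟩₁𝔠 \ 𝔠`). -/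
theorem stmt12 {g ℓ : ℕ} (S : Set (Fin ℓ × Word g)) (hS : IsRightChipClosed S)
    (j : Fin ℓ) (u : Word g) :
    ((∃ a b : Word g, u = a * b ∧ (j, b) ∈ S) ∧ (j, u) ∉ S) ↔
      ∃! p : Word g × Word g,
        u = p.1 * p.2 ∧
          (∃ (ξ : Fin g × Bool) (b : Word g), p.2 = FreeMonoid.of ξ * b ∧ (j, b) ∈ S) ∧
          (j, p.2) ∉ S := by
  constructor
  · rintro ⟨⟨a, b, hab, hb⟩, hu⟩
    set T : Set (List (Fin g × Bool)) := {v | (j, FreeMonoid.ofList v) ∈ S} with hTdef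
    have hT : ∀ u v : List (Fin g × Bool), u ++ v ∈ T → v ∈ T := by
      intro u v huv
      exact hS j (FreeMonoid.ofList u) (FreeMonoid.ofList v) huv
    have key := auxList T hT (FreeMonoid.toList u) hu
      ⟨FreeMonoid.toList a, FreeMonoid.toList b, congrArg FreeMonoid.toList hab, hb⟩
    refine ((Equiv.prodCongr FreeMonoid.toList FreeMonoid.toList).existsUnique_congr ?_).mpr key
    rintro ⟨w, m⟩
    constructor
    · rintro ⟨h1, ⟨ξ, b', h2, hb'⟩, h3⟩
      exact ⟨congrArg FreeMonoid.toList h1, ⟨ξ, FreeMonoid.toList b', congrArg FreeMonoid.toList h2, hb'⟩, h3⟩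
    · rintro ⟨h1, ⟨ξ, b', h2, hb'⟩, h3⟩
      exact ⟨FreeMonoid.toList.injective h1, ⟨ξ, FreeMonoid.ofList b', FreeMonoid.toList.injective h2, hb'⟩, h3⟩
  · rintro ⟨⟨w, m⟩, ⟨heq, ⟨ξ, b, hm, hb⟩, hmT⟩, -⟩
    refine ⟨⟨w * FreeMonoid.of ξ, b, by rw [heq, hm, mul_assoc], hb⟩, fun h => hmT (hS j w m (heq ▸ h))⟩


end NSS
end

section
/- In particular (corollary of the trichotomy): if a subspace B ⊆ S^k contains no nonzero positive semidefinite matrix, then its orthogonal complement B^⊥ (with respect to the trace inner product) contains a positive definite matrix. -/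
open Matrix

namespace NSS14

attribute [local instance] Matrix.seminormedAddCommGroup Matrix.normedAddCommGroup Matrix.normedSpace

variable {k : ℕ}

/-- trace of a product as a double sum -/
lemma trace_mul_sum (M X : Matrix (Fin k) (Fin k) ℝ) :
    (M * X).trace = ∑ i, ∑ j, M i j * X j i := by
  simp [Matrix.trace, Matrix.diag, Matrix.mul_apply]

lemma quad_eq_trace (A : Matrix (Fin k) (Fin k) ℝ) (x : Fin k → ℝ) :
    x ⬝ᵥ A *ᵥ x = (A * vecMulVec x x).trace := by
  rw [trace_mul_sum]
  simp only [dotProduct, mulVec, vecMulVec, Matrix.of_apply, Finset.mul_sum, dotProduct]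
  congr 1; ext i; congr 1; ext j; ring

lemma vecMulVec_posSemidef (x : Fin k → ℝ) : (vecMulVec x x).PosSemidef := by
  apply Matrix.PosSemidef.of_dotProduct_mulVec_nonneg
  · ext i j
    simp [vecMulVec, Matrix.conjTranspose_apply, mul_comm]
  · intro y
    have : star y ⬝ᵥ (vecMulVec x x) *ᵥ y = (x ⬝ᵥ y) * (x ⬝ᵥ y) := by
      simp only [star_trivial, dotProduct, mulVec, vecMulVec, Matrix.of_apply, Finset.mul_sum,
        Finset.sum_mul]
      rw [Finset.sum_comm]
      congr 1; ext i; congr 1; ext j; ring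
    rw [this]
    exact mul_self_nonneg _

lemma vecMulVec_trace (x : Fin k → ℝ) : (vecMulVec x x).trace = x ⬝ᵥ x := by
  simp [Matrix.trace, Matrix.diag, vecMulVec, dotProduct]

lemma psd_quad (X : Matrix (Fin k) (Fin k) ℝ) (hX : X.PosSemidef) (x : Fin k → ℝ) :
    0 ≤ x ⬝ᵥ X *ᵥ x := by
  simpa using hX.dotProduct_mulVec_nonneg x

lemma single_quad (X : Matrix (Fin k) (Fin k) ℝ) (i j : Fin k) :
    (Pi.single i (1:ℝ)) ⬝ᵥ X *ᵥ (Pi.single j 1) = X i j := by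
  simp [single_dotProduct, mulVec, dotProduct_single]

lemma psd_diag_nonneg {X : Matrix (Fin k) (Fin k) ℝ} (hX : X.PosSemidef) (i : Fin k) :
    0 ≤ X i i := by
  have := psd_quad X hX (Pi.single i 1)
  rwa [single_quad] at this

lemma psd_entry_bound {X : Matrix (Fin k) (Fin k) ℝ} (hX : X.PosSemidef)
    (ht : X.trace = 1) (i j : Fin k) : |X i j| ≤ 1 := by
  have hdle : ∀ m : Fin k, X m m ≤ 1 := by
    intro m
    have h1 : ∑ n, X n n = 1 := by simpa [Matrix.trace, Matrix.diag] using ht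
    have h2 : X m m ≤ ∑ n, X n n :=
      Finset.single_le_sum (fun n _ => psd_diag_nonneg hX n) (Finset.mem_univ m)
    linarith
  rcases eq_or_ne i j with rfl | hij
  · rw [abs_of_nonneg (psd_diag_nonneg hX i)]; exact hdle i
  · have hsym : X j i = X i j := by
      have := hX.1
      have h2 : Xᴴ i j = X i j := by rw [this]
      simpa [Matrix.conjTranspose_apply] using h2
    have hp := psd_quad X hX (Pi.single i 1 + Pi.single j 1)
    have hm := psd_quad X hX (Pi.single i 1 - Pi.single j 1)
    rw [show (Pi.single i (1:ℝ) + Pi.single j 1) ⬝ᵥ X *ᵥ (Pi.single i 1 + Pi.single j 1)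
        = X i i + X i j + X j i + X j j by
      simp [add_dotProduct, dotProduct_add, mulVec_add, single_quad]; ring] at hp
    rw [show (Pi.single i (1:ℝ) - Pi.single j 1) ⬝ᵥ X *ᵥ (Pi.single i 1 - Pi.single j 1)
        = X i i - X i j - X j i + X j j by
      simp [sub_dotProduct, dotProduct_sub, mulVec_sub, single_quad]; ring] at hm
    have h0i := psd_diag_nonneg hX i
    have h0j := psd_diag_nonneg hX j
    have hii := hdle i
    have hjj := hdle j
    rw [hsym] at hp hm
    rw [abs_le]
    constructor <;> nlinarith [hX.2]



lemma cont_entry (i j : Fin k) : Continuous fun X : Matrix (Fin k) (Fin k) ℝ => X i j :=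
  (continuous_apply j).comp (continuous_apply i)

lemma cont_quad (x : Fin k → ℝ) :
    Continuous fun X : Matrix (Fin k) (Fin k) ℝ => x ⬝ᵥ X *ᵥ x := by
  simp only [dotProduct, mulVec]
  have : Continuous fun X : Matrix (Fin k) (Fin k) ℝ =>
      ∑ i, (∑ j, X i j * x j) * x i :=
    continuous_finset_sum _ fun i _ =>
      (continuous_finset_sum _ fun j _ => (cont_entry i j).mul continuous_const).mul
        continuous_const
  exact this.congr fun X => Finset.sum_congr rfl fun i _ => mul_comm _ _

lemma cont_trace : Continuous fun X : Matrix (Fin k) (Fin k) ℝ => X.trace := by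
  simp only [Matrix.trace, Matrix.diag]
  exact continuous_finset_sum _ fun i _ => cont_entry i i

example : ProperSpace (Matrix (Fin k) (Fin k) ℝ) := inferInstance
example (B : Submodule ℝ (Matrix (Fin k) (Fin k) ℝ)) : IsClosed (B : Set (Matrix (Fin k) (Fin k) ℝ)) :=
  Submodule.closed_of_finiteDimensional B
example : LocallyConvexSpace ℝ (Matrix (Fin k) (Fin k) ℝ) := NormedSpace.toLocallyConvexSpace

lemma conjTranspose_eq_transpose (X : Matrix (Fin k) (Fin k) ℝ) : Xᴴ = Xᵀ := by
  ext i j; simp [Matrix.conjTranspose_apply, Matrix.transpose_apply]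

lemma psd_iff (X : Matrix (Fin k) (Fin k) ℝ) :
    X.PosSemidef ↔ Xᵀ = X ∧ ∀ x : Fin k → ℝ, 0 ≤ x ⬝ᵥ X *ᵥ x := by
  constructor
  · rintro ⟨h1, h2⟩
    exact ⟨by rw [← conjTranspose_eq_transpose]; exact h1, fun x => by simpa using (Matrix.posSemidef_iff_dotProduct_mulVec.mp ⟨h1, h2⟩).2 x⟩
  · rintro ⟨h1, h2⟩
    refine Matrix.PosSemidef.of_dotProduct_mulVec_nonneg ?_ (fun x => by simpa using h2 x)
    show Xᴴ = X
    rw [conjTranspose_eq_transpose]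
    exact h1

/-- The set of PSD matrices with trace 1. -/
def K (k : ℕ) : Set (Matrix (Fin k) (Fin k) ℝ) := {X | X.PosSemidef ∧ X.trace = 1}

lemma K_closed : IsClosed (K k) := by
  have h1 : K k = ({X | Xᵀ = X} ∩ (⋂ x : Fin k → ℝ, {X | 0 ≤ x ⬝ᵥ X *ᵥ x})) ∩
      {X | X.trace = 1} := by
    ext X
    simp only [K, Set.mem_setOf_eq, Set.mem_inter_iff, Set.mem_iInter, psd_iff]
  rw [h1]
  refine (IsClosed.inter ?_ ?_).inter ?_
  · have : {X : Matrix (Fin k) (Fin k) ℝ | Xᵀ = X} =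
        ⋂ i, ⋂ j, {X : Matrix (Fin k) (Fin k) ℝ | X j i = X i j} := by
      ext X
      simp only [Set.mem_setOf_eq, Set.mem_iInter]
      constructor
      · intro hh i j
        exact congrFun (congrFun hh i) j
      · intro hh
        ext i j
        rw [Matrix.transpose_apply]
        exact hh i j
    rw [this]
    exact isClosed_iInter fun i => isClosed_iInter fun j =>
      isClosed_eq (cont_entry j i) (cont_entry i j)
  · exact isClosed_iInter fun x => isClosed_le continuous_const (cont_quad x)
  · exact isClosed_eq cont_trace continuous_const

lemma K_compact : IsCompact (K k) := by
  refine Metric.isCompact_of_isClosed_isBounded K_closed ?_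
  rw [Metric.isBounded_iff_subset_closedBall 0]
  refine ⟨1, fun X hX => ?_⟩
  rw [Metric.mem_closedBall, dist_zero_right]
  rw [Matrix.norm_le_iff zero_le_one]
  intro i j
  rw [Real.norm_eq_abs]
  exact psd_entry_bound hX.1 hX.2 i j

lemma K_convex : Convex ℝ (K k) := by
  rintro X ⟨hX, htX⟩ Y ⟨hY, htY⟩ a b ha hb hab
  rw [psd_iff] at hX hY
  refine ⟨psd_iff _ |>.mpr ⟨?_, ?_⟩, ?_⟩
  · rw [Matrix.transpose_add, Matrix.transpose_smul, Matrix.transpose_smul, hX.1, hY.1]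
  · intro x
    have h1 := hX.2 x
    have h2 := hY.2 x
    have : x ⬝ᵥ (a • X + b • Y) *ᵥ x = a * (x ⬝ᵥ X *ᵥ x) + b * (x ⬝ᵥ Y *ᵥ x) := by
      simp [Matrix.add_mulVec, Matrix.smul_mulVec, dotProduct_add, dotProduct_smul,
        smul_eq_mul]
    rw [this]
    positivity
  · rw [Matrix.trace_add, Matrix.trace_smul, Matrix.trace_smul, htX, htY]
    simpa [smul_eq_mul] using hab

/-- The orthogonal complement of `B` inside the space of symmetric `k×k` real matrices,
with respect to the trace inner product `⟨A,C⟩ = Tr(AC)`. -/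
def symOrth {k : ℕ} (B : Submodule ℝ (Matrix (Fin k) (Fin k) ℝ)) :
    Set (Matrix (Fin k) (Fin k) ℝ) :=
  {A | Aᵀ = A ∧ ∀ C ∈ B, (A * C).trace = 0}

/-- if a subspace `B` of the symmetric `k×k` real matrices contains no
nonzero positive semidefinite matrix, then `B^⊥` contains a positive definite matrix. -/
theorem stmt14 {k : ℕ} (B : Submodule ℝ (Matrix (Fin k) (Fin k) ℝ))
    (hB : ∀ A ∈ B, Aᵀ = A)
    (h : ∀ A ∈ B, A.PosSemidef → A = 0) :
    ∃ A ∈ symOrth B, A.PosDef := by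
  -- K and B are disjoint
  have hdisj : Disjoint (K k) (B : Set (Matrix (Fin k) (Fin k) ℝ)) := by
    rw [Set.disjoint_left]
    rintro X ⟨hX, htX⟩ hXB
    have : X = 0 := h X hXB hX
    rw [this, Matrix.trace_zero] at htX
    norm_num at htX
  haveI : LocallyConvexSpace ℝ (Matrix (Fin k) (Fin k) ℝ) := NormedSpace.toLocallyConvexSpace
  obtain ⟨f, u, v, hfu, huv, hfv⟩ :=
    geometric_hahn_banach_compact_closed K_convex K_compact B.convex
      (Submodule.closed_of_finiteDimensional B) hdisj
  -- f vanishes on B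
  have hf0 : ∀ C ∈ B, f C = 0 := by
    intro C hC
    by_contra hne
    have hmem : ((v - 1) / f C) • C ∈ B := B.smul_mem _ hC
    have := hfv _ hmem
    rw [f.map_smul, smul_eq_mul, div_mul_cancel₀ _ hne] at this
    linarith
  have hv0 : v < 0 := by
    have := hfv 0 B.zero_mem
    rw [map_zero] at this
    linarith
  -- f is negative on K
  have hKneg : ∀ X ∈ K k, f X < 0 := fun X hX => lt_trans (lt_trans (hfu X hX) huv) hv0
  -- representation matrix
  set M : Matrix (Fin k) (Fin k) ℝ := Matrix.of fun i j => -f (Matrix.single j i 1)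
    with hM
  have hrep : ∀ X : Matrix (Fin k) (Fin k) ℝ, (M * X).trace = -f X := by
    intro X
    have hfX : f X = ∑ p, ∑ q, X p q * f (Matrix.single p q 1) := by
      conv_lhs => rw [Matrix.matrix_eq_sum_single X]
      rw [map_sum]
      refine Finset.sum_congr rfl fun p _ => ?_
      rw [map_sum]
      refine Finset.sum_congr rfl fun q _ => ?_
      have hsb : Matrix.single p q (X p q) = X p q • Matrix.single p q 1 := by
        rw [Matrix.smul_single, smul_eq_mul, mul_one]
      rw [hsb, f.map_smul, smul_eq_mul]
    calc (M * X).trace = ∑ i, ∑ j, M i j * X j i := trace_mul_sum M X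
      _ = ∑ j, ∑ i, M i j * X j i := Finset.sum_comm
      _ = ∑ p, ∑ q, -(X p q * f (Matrix.single p q 1)) := by
          refine Finset.sum_congr rfl fun p _ => Finset.sum_congr rfl fun q _ => ?_
          show M q p * X p q = _
          rw [hM]
          show (-f (Matrix.single p q 1)) * X p q = _
          ring
      _ = -f X := by rw [hfX]; simp
  -- symmetrize
  set A : Matrix (Fin k) (Fin k) ℝ := (1/2 : ℝ) • (M + Mᵀ) with hA
  have hAsym : Aᵀ = A := by
    rw [hA, Matrix.transpose_smul, Matrix.transpose_add, Matrix.transpose_transpose, add_comm]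
  have hArep : ∀ X : Matrix (Fin k) (Fin k) ℝ, Xᵀ = X → (A * X).trace = -f X := by
    intro X hXs
    have h2 : (Mᵀ * X).trace = (M * X).trace := by
      calc (Mᵀ * X).trace = ((Mᵀ * X)ᵀ).trace := (Matrix.trace_transpose _).symm
        _ = (Xᵀ * M).trace := by rw [Matrix.transpose_mul, Matrix.transpose_transpose]
        _ = (M * Xᵀ).trace := Matrix.trace_mul_comm _ _
        _ = (M * X).trace := by rw [hXs]
    rw [hA, Matrix.smul_mul, Matrix.add_mul, Matrix.trace_smul, Matrix.trace_add, h2, hrep,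
      smul_eq_mul]
    ring
  refine ⟨A, ⟨hAsym, fun C hC => ?_⟩, Matrix.posDef_iff_dotProduct_mulVec.mpr ⟨?_, ?_⟩⟩
  · rw [hArep C (hB C hC), hf0 C hC, neg_zero]
  · show Aᴴ = A
    rw [conjTranspose_eq_transpose A, hAsym]
  · intro x hx
    have hnn : (0:ℝ) ≤ x ⬝ᵥ x := Finset.sum_nonneg fun i _ => mul_self_nonneg _
    have hxx : (0:ℝ) < x ⬝ᵥ x := by
      rcases hnn.lt_or_eq with h' | h'
      · exact h'
      · exact absurd (dotProduct_self_eq_zero.mp h'.symm) hx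
    have hvs : (vecMulVec x x)ᵀ = vecMulVec x x := by
      rw [← conjTranspose_eq_transpose]
      exact (vecMulVec_posSemidef x).1
    have hKmem : (x ⬝ᵥ x)⁻¹ • vecMulVec x x ∈ K k := by
      refine ⟨(psd_iff _).mpr ⟨?_, ?_⟩, ?_⟩
      · rw [Matrix.transpose_smul, hvs]
      · intro y
        have hq := psd_quad _ (vecMulVec_posSemidef x) y
        have heq : y ⬝ᵥ ((x ⬝ᵥ x)⁻¹ • vecMulVec x x) *ᵥ y
            = (x ⬝ᵥ x)⁻¹ * (y ⬝ᵥ vecMulVec x x *ᵥ y) := by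
          rw [Matrix.smul_mulVec, dotProduct_smul, smul_eq_mul]
        rw [heq]
        positivity
      · rw [Matrix.trace_smul, vecMulVec_trace, smul_eq_mul,
          inv_mul_cancel₀ (ne_of_gt hxx)]
    have hneg := hKneg _ hKmem
    have hsym' : ((x ⬝ᵥ x)⁻¹ • vecMulVec x x)ᵀ = (x ⬝ᵥ x)⁻¹ • vecMulVec x x := by
      rw [Matrix.transpose_smul, hvs]
    have hrepX := hArep _ hsym'
    have hpos : 0 < (A * ((x ⬝ᵥ x)⁻¹ • vecMulVec x x)).trace := by
      rw [hrepX]; linarith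
    have hexp : (A * ((x ⬝ᵥ x)⁻¹ • vecMulVec x x)).trace = (x ⬝ᵥ x)⁻¹ * (x ⬝ᵥ A *ᵥ x) := by
      rw [Matrix.mul_smul, Matrix.trace_smul, smul_eq_mul, quad_eq_trace]
    show 0 < star x ⬝ᵥ A *ᵥ x
    rw [star_trivial]
    nlinarith [hxx, hpos, hexp, inv_pos.mpr hxx]

end NSS14
end
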